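/- Let (p,q,(u,v)) be an extremal of the reduced system on a nondegenerate interval [t0,t1] that is u-singular, i.e. φ_u(t) = 0 for all t ∈ [t0,t1]. Then: y(t) = 0 for all t ∈ [t0,t1] (the trajectory lies on the x-axis); the covector p is constant on [t0,t1] with p_y = 0 and p_x < 0; u(t) = 0 for a.e. t ∈ [t0,t1]; and v(t) = η for a.e. t ∈ [t0,t1]. -/

import Mathlib

open MeasureTheory Set

noncomputable section

/-- An admissible pair of the reduced system on `[t0, t1]`: a measurable control
`(u, v)` with values in `[-1,1] × [ν,η]` together with a Lipschitz curve
`q = (x, y)` satisfying `x' = -v - u y`, `y' = u x` a.e. -/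
def ReducedAdm (ν η t0 t1 : ℝ) (q : ℝ → ℝ × ℝ) (u v : ℝ → ℝ) : Prop :=
  Measurable u ∧ Measurable v ∧
  (∀ᵐ t ∂volume, t ∈ Icc t0 t1 → u t ∈ Icc (-1 : ℝ) 1 ∧ v t ∈ Icc ν η) ∧
  (∃ K, LipschitzOnWith K q (Icc t0 t1)) ∧
  (∀ᵐ t ∂volume, t ∈ Icc t0 t1 →
    HasDerivWithinAt q (-(v t) - u t * (q t).2, u t * (q t).1) (Icc t0 t1) t)

/-- The switching function `φ_u(t) = p_y(t) x(t) - p_x(t) y(t)` of the reduced system. -/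
def phiU (p q : ℝ → ℝ × ℝ) (t : ℝ) : ℝ := (p t).2 * (q t).1 - (p t).1 * (q t).2

/-- The switching function `φ_v(t) = -p_x(t)` of the reduced system. -/
def phiV (p : ℝ → ℝ × ℝ) (t : ℝ) : ℝ := -(p t).1

/-- An extremal of the reduced system on `[t0, t1]` with multiplier `lam ≥ 0`: an
admissible pair together with a Lipschitz never vanishing covector `p = (p_x, p_y)`
satisfying the adjoint equation `p_x' = -u p_y`, `p_y' = u p_x` a.e., the maximality
condition a.e., and constancy of the Hamiltonian `v φ_v + u φ_u = lam` a.e. -/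
def ReducedExtremal (ν η t0 t1 : ℝ) (p q : ℝ → ℝ × ℝ) (u v : ℝ → ℝ) (lam : ℝ) : Prop :=
  ReducedAdm ν η t0 t1 q u v ∧
  (∃ K, LipschitzOnWith K p (Icc t0 t1)) ∧
  (∀ t ∈ Icc t0 t1, p t ≠ 0) ∧
  (∀ᵐ t ∂volume, t ∈ Icc t0 t1 →
    HasDerivWithinAt p (-(u t) * (p t).2, u t * (p t).1) (Icc t0 t1) t) ∧
  0 ≤ lam ∧
  (∀ᵐ t ∂volume, t ∈ Icc t0 t1 →
    (∀ w ∈ Icc (-1 : ℝ) 1, ∀ z ∈ Icc ν η,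
      z * phiV p t + w * phiU p q t ≤ v t * phiV p t + u t * phiU p q t) ∧
    v t * phiV p t + u t * phiU p q t = lam)

lemma compFst {f : ℝ → ℝ × ℝ} {d : ℝ × ℝ} {s : Set ℝ} {x : ℝ}
    (h : HasDerivWithinAt f d s x) : HasDerivWithinAt (fun t => (f t).1) d.1 s x := by
  exact (ContinuousLinearMap.fst ℝ ℝ ℝ).hasFDerivAt.comp_hasDerivWithinAt x h

lemma compSnd {f : ℝ → ℝ × ℝ} {d : ℝ × ℝ} {s : Set ℝ} {x : ℝ}
    (h : HasDerivWithinAt f d s x) : HasDerivWithinAt (fun t => (f t).2) d.2 s x := by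
  exact (ContinuousLinearMap.snd ℝ ℝ ℝ).hasFDerivAt.comp_hasDerivWithinAt x h

/-- Along a `u`-singular extremal of the reduced system, the trajectory lies on the
`x`-axis, the covector is constant with `p_y = 0` and `p_x < 0`, the control `u`
vanishes a.e., and the linear velocity is maximal (`v = η`) a.e. -/
theorem reduced_u_singular (ν η : ℝ) (hν : 0 < ν) (hνη : ν ≤ η)
    (t0 t1 : ℝ) (ht : t0 < t1)
    (p q : ℝ → ℝ × ℝ) (u v : ℝ → ℝ) (lam : ℝ)
    (hext : ReducedExtremal ν η t0 t1 p q u v lam)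
    (husing : ∀ t ∈ Icc t0 t1, phiU p q t = 0) :
    (∀ t ∈ Icc t0 t1, (q t).2 = 0) ∧
    (∀ t ∈ Icc t0 t1, p t = p t0) ∧
    (p t0).2 = 0 ∧ (p t0).1 < 0 ∧
    (∀ᵐ t ∂volume, t ∈ Icc t0 t1 → u t = 0) ∧
    (∀ᵐ t ∂volume, t ∈ Icc t0 t1 → v t = η) := by
  obtain ⟨⟨hu_meas, hv_meas, hbound, ⟨Kq, hqlip⟩, hqder⟩, ⟨Kp, hplip⟩, hpne, hpder, hlam, hmax⟩ :=
    hext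
  have ht0 : t0 ∈ Icc t0 t1 := ⟨le_rfl, le_of_lt ht⟩
  have hη : (0:ℝ) < η := lt_of_lt_of_le hν hνη
  have hpc : ContinuousOn p (Icc t0 t1) := hplip.continuousOn
  have hudiff : UniqueDiffOn ℝ (Icc t0 t1) := uniqueDiffOn_Icc ht
  -- Step 1: p_y = 0 a.e. on the interval
  have hpy_ae : ∀ᵐ t ∂volume, t ∈ Icc t0 t1 → (p t).2 = 0 := by
    filter_upwards [hbound, hqder, hpder] with t h1 h2 h3
    intro htI
    have hvpos : 0 < v t := lt_of_lt_of_le hν (h1 htI).2.1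
    have hx := compFst (h2 htI)
    have hy := compSnd (h2 htI)
    have hpx := compFst (h3 htI)
    have hpy := compSnd (h3 htI)
    have hd : HasDerivWithinAt (phiU p q)
        ((u t * (p t).1) * (q t).1 + (p t).2 * (-(v t) - u t * (q t).2) -
          ((-(u t) * (p t).2) * (q t).2 + (p t).1 * (u t * (q t).1))) (Icc t0 t1) t := by
      exact (hpy.mul hx).sub (hpx.mul hy)
    have hd' : HasDerivWithinAt (phiU p q) (-(v t) * (p t).2) (Icc t0 t1) t := by
      have : (u t * (p t).1) * (q t).1 + (p t).2 * (-(v t) - u t * (q t).2) -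
          ((-(u t) * (p t).2) * (q t).2 + (p t).1 * (u t * (q t).1)) = -(v t) * (p t).2 := by
        ring
      rwa [this] at hd
    have h0 : HasDerivWithinAt (phiU p q) 0 (Icc t0 t1) t :=
      (hasDerivWithinAt_const t (Icc t0 t1) (0:ℝ)).congr
        (fun y hy => husing y hy) (husing t htI)
    have heq : -(v t) * (p t).2 = 0 := (hudiff t htI).eq_deriv _ hd' h0
    rcases mul_eq_zero.1 heq with h | h
    · exact absurd (neg_eq_zero.1 h) (ne_of_gt hvpos)
    · exact h
  -- upgrade to everywhere by continuity
  have hpy : ∀ t ∈ Icc t0 t1, (p t).2 = 0 := by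
    have hres : (fun t => (p t).2) =ᵐ[volume.restrict (Icc t0 t1)] (fun _ => (0:ℝ)) :=
      (ae_restrict_iff' measurableSet_Icc).2 hpy_ae
    exact Measure.eqOn_Icc_of_ae_eq volume (ne_of_lt ht) hres
      (continuous_snd.comp_continuousOn hpc) continuousOn_const
  have hpx_ne : ∀ t ∈ Icc t0 t1, (p t).1 ≠ 0 := by
    intro t htI h
    exact hpne t htI (Prod.ext h (hpy t htI))
  -- Step 2: a.e. facts: v = η, p_x = -lam/η, u = 0
  have hkey : ∀ᵐ t ∂volume, t ∈ Icc t0 t1 →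
      v t = η ∧ (p t).1 = -(lam / η) ∧ u t = 0 := by
    filter_upwards [hbound, hpder, hmax] with t h1 h3 h4
    intro htI
    have hvpos : 0 < v t := lt_of_lt_of_le hν (h1 htI).2.1
    have hU0 : phiU p q t = 0 := husing t htI
    have hham : v t * (-(p t).1) = lam := by
      have := (h4 htI).2
      rw [hU0] at this; simpa [phiV] using this
    have hpx_neg : (p t).1 < 0 := by
      rcases lt_or_gt_of_ne (hpx_ne t htI) with h | h
      · exact h
      · nlinarith
    have hphiV_pos : 0 < phiV p t := by simp [phiV]; linarith
    have hvη : v t = η := by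
      have hmx := (h4 htI).1 0 (by norm_num) η ⟨hνη, le_rfl⟩
      rw [hU0] at hmx
      have : η * phiV p t ≤ v t * phiV p t := by linarith
      have := le_of_mul_le_mul_right (by linarith [this] : η * phiV p t ≤ v t * phiV p t) hphiV_pos
      -- careful: mul on wrong side
      exact le_antisymm (h1 htI).2.2 (by nlinarith)
    have hpx_val : (p t).1 = -(lam / η) := by
      rw [hvη] at hham
      field_simp
      linarith
    -- u = 0 from p_y' = u * p_x and p_y ≡ 0
    have hpyd := compSnd (h3 htI)
    have h0 : HasDerivWithinAt (fun s => (p s).2) 0 (Icc t0 t1) t :=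
      (hasDerivWithinAt_const t (Icc t0 t1) (0:ℝ)).congr
        (fun y hy => hpy y hy) (hpy t htI)
    have heq : u t * (p t).1 = 0 := (hudiff t htI).eq_deriv _ hpyd h0
    have hu0 : u t = 0 := by
      rcases mul_eq_zero.1 heq with h | h
      · exact h
      · exact absurd h (hpx_ne t htI)
    exact ⟨hvη, hpx_val, hu0⟩
  -- px constant everywhere by continuity
  have hpx : ∀ t ∈ Icc t0 t1, (p t).1 = -(lam / η) := by
    have hres : (fun t => (p t).1) =ᵐ[volume.restrict (Icc t0 t1)] (fun _ => -(lam / η)) := by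
      refine (ae_restrict_iff' measurableSet_Icc).2 ?_
      filter_upwards [hkey] with t h htI
      exact (h htI).2.1
    exact Measure.eqOn_Icc_of_ae_eq volume (ne_of_lt ht) hres
      (continuous_fst.comp_continuousOn hpc) continuousOn_const
  have hpconst : ∀ t ∈ Icc t0 t1, p t = p t0 := by
    intro t htI
    exact Prod.ext (by rw [hpx t htI, hpx t0 ht0]) (by rw [hpy t htI, hpy t0 ht0])
  have hpx0_neg : (p t0).1 < 0 := by
    rcases lt_or_gt_of_ne (hpx_ne t0 ht0) with h | h
    · exact h
    · exfalso
      have := hpx t0 ht0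
      have hlamη : 0 ≤ lam / η := div_nonneg hlam (le_of_lt hη)
      linarith
  have hy0 : ∀ t ∈ Icc t0 t1, (q t).2 = 0 := by
    intro t htI
    have := husing t htI
    rw [phiU, hpy t htI] at this
    have h1 : (p t).1 * (q t).2 = 0 := by linarith
    rcases mul_eq_zero.1 h1 with h | h
    · exact absurd h (hpx_ne t htI)
    · exact h
  refine ⟨hy0, hpconst, hpy t0 ht0, hpx0_neg, ?_, ?_⟩
  · filter_upwards [hkey] with t h htI; exact (h htI).2.2
  · filter_upwards [hkey] with t h htI; exact (h htI).1
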